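/- The only 2-polytopes containing a special 1-simplex are convex quadrilaterals: a polygon P ⊂ ℝ² has two vertices v₀, v₁ such that every edge of P contains exactly one of them if and only if P has exactly 4 vertices. -/

import Mathlib

open Set Module

/-- A (possibly empty or improper) face of `P`: the set of maximizers of a linear
functional over `P` (at level `α`, an upper bound of the functional on `P`). -/
def IsFace {E : Type*} [AddCommGroup E] [Module ℝ E] (P F : Set E) : Prop :=
  ∃ (c : E →ₗ[ℝ] ℝ) (α : ℝ), (∀ x ∈ P, c x ≤ α) ∧ F = {x ∈ P | c x = α}

/-- A facet of the polytope `P`: a nonempty proper face of dimension `dim P - 1`. -/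
def IsFacet {E : Type*} [AddCommGroup E] [Module ℝ E] (P F : Set E) : Prop :=
  IsFace P F ∧ F ≠ P ∧ F.Nonempty ∧
    Module.finrank ℝ (vectorSpan ℝ F) + 1 = Module.finrank ℝ (vectorSpan ℝ P)

/-- The number of nonempty proper faces of `P` of dimension `i`. -/
noncomputable def nF {E : Type*} [AddCommGroup E] [Module ℝ E] (P : Set E) (i : ℕ) : ℕ :=
  Set.ncard {F : Set E | IsFace P F ∧ F ≠ P ∧ F.Nonempty ∧
    Module.finrank ℝ (vectorSpan ℝ F) = i}

private lemma lin_apply (c : (Fin 2 → ℝ) →ₗ[ℝ] ℝ) (x : Fin 2 → ℝ) :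
    c x = x 0 * c ![1,0] + x 1 * c ![0,1] := by
  have hx : x = x 0 • ![(1:ℝ),0] + x 1 • ![(0:ℝ),1] := by
    funext i; fin_cases i <;> simp
  conv_lhs => rw [hx]
  rw [map_add, map_smul, map_smul, smul_eq_mul, smul_eq_mul]

private lemma vs_conv (s : Set (Fin 2 → ℝ)) :
    vectorSpan ℝ (convexHull ℝ s) = vectorSpan ℝ s := by
  rw [← direction_affineSpan ℝ (convexHull ℝ s), affineSpan_convexHull, direction_affineSpan]

private lemma face_hull (V : Finset (Fin 2 → ℝ)) (c : (Fin 2 → ℝ) →ₗ[ℝ] ℝ) (α : ℝ)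
    (h : ∀ v ∈ V, c v ≤ α) :
    {x ∈ convexHull ℝ (V : Set (Fin 2 → ℝ)) | c x = α} =
      convexHull ℝ {u : Fin 2 → ℝ | u ∈ V ∧ c u = α} := by
  classical
  apply Set.Subset.antisymm
  · rintro x ⟨hx, hcx⟩
    rw [Finset.convexHull_eq] at hx
    obtain ⟨w, hw0, hw1, hxx⟩ := hx
    rw [Finset.centerMass_eq_of_sum_1 _ _ hw1] at hxx
    have hcx' : ∑ y ∈ V, w y * c y = α := by
      rw [← hcx, ← hxx, map_sum]; simp [smul_eq_mul]
    have hzero : ∀ y ∈ V, c y ≠ α → w y = 0 := by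
      have hsum : ∑ y ∈ V, w y * (α - c y) = 0 := by
        have e1 : ∑ y ∈ V, w y * (α - c y)
            = (∑ y ∈ V, w y) * α - ∑ y ∈ V, w y * c y := by
          rw [Finset.sum_mul, ← Finset.sum_sub_distrib]
          exact Finset.sum_congr rfl (fun y hy => by ring)
        rw [e1, hw1, hcx']; ring
      intro y hy hne
      have h1 := (Finset.sum_eq_zero_iff_of_nonneg
        (fun i hi => mul_nonneg (hw0 i hi) (sub_nonneg.2 (h i hi)))).1 hsum y hy
      have h2 : α - c y ≠ 0 := sub_ne_zero.2 (Ne.symm hne)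
      exact (mul_eq_zero.1 h1).resolve_right h2
    set W := V.filter (fun u => c u = α) with hW
    have hwzero : ∀ y ∈ V, y ∉ W → w y = 0 := fun y hy hyW =>
      hzero y hy (by simpa [hW, Finset.mem_filter, hy] using hyW)
    have hWsum : ∑ y ∈ W, w y = 1 := by
      rw [← hw1]
      exact (Finset.sum_subset (Finset.filter_subset _ _) hwzero).symm ▸ rfl
    have hWx : ∑ y ∈ W, w y • y = x := by
      rw [← hxx]
      refine (Finset.sum_subset (Finset.filter_subset _ _) ?_)
      intro y hy hyW; rw [hwzero y hy hyW, zero_smul]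
    have hmem := W.centerMass_mem_convexHull (w := w) (z := id)
      (s := {u : Fin 2 → ℝ | u ∈ V ∧ c u = α})
      (fun i hi => hw0 i (Finset.filter_subset _ _ hi))
      (by rw [hWsum]; norm_num)
      (fun i hi => by
        have := Finset.mem_filter.1 hi
        exact ⟨this.1, this.2⟩)
    rwa [Finset.centerMass_eq_of_sum_1 _ _ hWsum, show ∑ i ∈ W, w i • id i = x from hWx] at hmem
  · intro x hx
    have h1 : convexHull ℝ {u : Fin 2 → ℝ | u ∈ V ∧ c u = α} ⊆
        convexHull ℝ (V : Set (Fin 2 → ℝ)) := convexHull_mono (fun u hu => hu.1)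
    refine ⟨h1 hx, ?_⟩
    have h2 : convexHull ℝ {u : Fin 2 → ℝ | u ∈ V ∧ c u = α} ⊆ {x | c x = α} := by
      apply convexHull_min (fun u hu => hu.2) (convex_hyperplane c.isLinear α)
    exact h2 hx

private lemma card_le_two_of_collinear {P : Set (Fin 2 → ℝ)} {W : Finset (Fin 2 → ℝ)}
    (hW : ∀ u ∈ W, u ∈ Set.extremePoints ℝ P)
    (hcol : Collinear ℝ (W : Set (Fin 2 → ℝ))) : W.card ≤ 2 := by
  by_contra hlt
  push_neg at hlt
  obtain ⟨x, hx, y, hy, z, hz, hxy, hxz, hyz⟩ := Finset.two_lt_card.1 hlt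
  have hsub : ({x, y, z} : Set (Fin 2 → ℝ)) ⊆ (W : Set (Fin 2 → ℝ)) := by
    intro u hu
    rcases hu with rfl | rfl | rfl <;> simpa
  have hc3 := hcol.subset hsub
  have hPx : x ∈ P := extremePoints_subset (hW x hx)
  have hPy : y ∈ P := extremePoints_subset (hW y hy)
  have hPz : z ∈ P := extremePoints_subset (hW z hz)
  rcases hc3.wbtw_or_wbtw_or_wbtw with h | h | h
  · rcases (mem_extremePoints_iff_forall_segment.1 (hW y hy)).2 x hPx z hPz h.mem_segment with
      h1 | h1
    exacts [hxy h1, hyz h1.symm]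
  · rcases (mem_extremePoints_iff_forall_segment.1 (hW z hz)).2 y hPy x hPx h.mem_segment with
      h1 | h1
    exacts [hyz h1, hxz h1]
  · rcases (mem_extremePoints_iff_forall_segment.1 (hW x hx)).2 z hPz y hPy h.mem_segment with
      h1 | h1
    exacts [hxz h1.symm, hxy h1.symm]

private lemma card3 (V : Finset (Fin 2 → ℝ)) (P : Set (Fin 2 → ℝ))
    (hP : P = convexHull ℝ (V : Set (Fin 2 → ℝ)))
    (hfull : Module.finrank ℝ (vectorSpan ℝ P) = 2) : 3 ≤ V.card := by
  by_contra hlt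
  push_neg at hlt
  have hcol : Collinear ℝ (V : Set (Fin 2 → ℝ)) := by
    interval_cases h : V.card
    · rw [Finset.card_eq_zero.1 h]; simpa using collinear_empty ℝ _
    · obtain ⟨a, rfl⟩ := Finset.card_eq_one.1 h
      simpa using collinear_singleton ℝ a
    · obtain ⟨a, b, hab, rfl⟩ := Finset.card_eq_two.1 h
      simpa using collinear_pair ℝ a b
  have h1 : Module.finrank ℝ (vectorSpan ℝ P) ≤ 1 := by
    rw [hP, vs_conv]
    exact hcol.finrank_le_one
  omega

private lemma sep (V : Finset (Fin 2 → ℝ)) (P : Set (Fin 2 → ℝ))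
    (hP : P = convexHull ℝ (V : Set (Fin 2 → ℝ)))
    (hvert : ∀ u ∈ V, u ∈ Set.extremePoints ℝ P) {v : Fin 2 → ℝ} (hv : v ∈ V) :
    ∃ c : (Fin 2 → ℝ) →ₗ[ℝ] ℝ, ∀ u ∈ V.erase v, c u < c v := by
  have hvx := hvert v hv
  have hnot : v ∉ convexHull ℝ ((V.erase v : Finset (Fin 2 → ℝ)) : Set (Fin 2 → ℝ)) := by
    intro hmem
    have hsub : convexHull ℝ ((V.erase v : Finset (Fin 2 → ℝ)) : Set (Fin 2 → ℝ)) ⊆ P := by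
      rw [hP]
      exact convexHull_mono (Finset.coe_subset.2 (Finset.erase_subset v V))
    have h1 := inter_extremePoints_subset_extremePoints_of_subset hsub ⟨hmem, hvx⟩
    have h2 := extremePoints_convexHull_subset h1
    simp at h2
  obtain ⟨f, u, hfu, huv⟩ := geometric_hahn_banach_closed_point
    (convex_convexHull ℝ _) ((V.erase v).finite_toSet.isClosed_convexHull (𝕜 := ℝ)) hnot
  refine ⟨f.toLinearMap, fun w hw => ?_⟩
  have h1 : f w < u := hfu w (subset_convexHull ℝ _ (by exact_mod_cast hw))
  exact lt_trans h1 huv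

private lemma edge_facet (V : Finset (Fin 2 → ℝ)) (P : Set (Fin 2 → ℝ))
    (hP : P = convexHull ℝ (V : Set (Fin 2 → ℝ)))
    (hfull : Module.finrank ℝ (vectorSpan ℝ P) = 2)
    {a b : Fin 2 → ℝ} (ha : a ∈ V) (hb : b ∈ V) (hab : a ≠ b)
    (c : (Fin 2 → ℝ) →ₗ[ℝ] ℝ) (α : ℝ) (hle : ∀ u ∈ V, c u ≤ α)
    (hca : c a = α) (hcb : c b = α) (hstrict : ∀ u ∈ V, c u = α → u = a ∨ u = b) :
    IsFacet P (convexHull ℝ ({a, b} : Set (Fin 2 → ℝ))) ∧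
      (∀ u ∈ V, u ∈ convexHull ℝ ({a, b} : Set (Fin 2 → ℝ)) ↔ u = a ∨ u = b) := by
  have hPle : ∀ x ∈ P, c x ≤ α := by
    rw [hP]
    exact fun x hx => convexHull_min hle (convex_halfSpace_le c.isLinear α) hx
  have hset : {u : Fin 2 → ℝ | u ∈ V ∧ c u = α} = ({a, b} : Set (Fin 2 → ℝ)) := by
    ext u
    constructor
    · rintro ⟨h1, h2⟩
      rcases hstrict u h1 h2 with rfl | rfl
      · exact Set.mem_insert _ _
      · exact Set.mem_insert_of_mem _ rfl
    · rintro (rfl | rfl)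
      exacts [⟨ha, hca⟩, ⟨hb, hcb⟩]
  have hFeq : convexHull ℝ ({a, b} : Set (Fin 2 → ℝ)) = {x ∈ P | c x = α} := by
    rw [hP, face_hull V c α hle, hset]
  have hdim : Module.finrank ℝ (vectorSpan ℝ (convexHull ℝ ({a, b} : Set (Fin 2 → ℝ)))) = 1 := by
    rw [vs_conv, vectorSpan_pair]
    exact finrank_span_singleton (vsub_ne_zero.2 hab)
  have hmemF : ∀ u ∈ V, u ∈ convexHull ℝ ({a, b} : Set (Fin 2 → ℝ)) ↔ u = a ∨ u = b := by
    intro u hu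
    constructor
    · intro hmem
      rw [hFeq] at hmem
      exact hstrict u hu hmem.2
    · rintro (rfl | rfl)
      · exact subset_convexHull ℝ _ (Set.mem_insert _ _)
      · exact subset_convexHull ℝ _ (Set.mem_insert_of_mem _ rfl)
  refine ⟨⟨⟨c, α, hPle, hFeq.symm ▸ rfl⟩, ?_, ?_, ?_⟩, hmemF⟩
  · intro hEq
    rw [hEq, hfull] at hdim
    omega
  · exact ⟨a, subset_convexHull ℝ _ (Set.mem_insert _ _)⟩
  · rw [hdim, hfull]

private lemma facet_structure (V : Finset (Fin 2 → ℝ)) (P : Set (Fin 2 → ℝ))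
    (hP : P = convexHull ℝ (V : Set (Fin 2 → ℝ)))
    (hfull : Module.finrank ℝ (vectorSpan ℝ P) = 2)
    (hvert : ∀ u ∈ V, u ∈ Set.extremePoints ℝ P)
    {F : Set (Fin 2 → ℝ)} (hF : IsFacet P F) :
    ∃ x ∈ V, ∃ y ∈ V, x ≠ y ∧ F = convexHull ℝ ({x, y} : Set (Fin 2 → ℝ)) ∧
      ∀ u ∈ V, (u ∈ F ↔ u = x ∨ u = y) := by
  classical
  obtain ⟨⟨c, α, hle, hFeq⟩, hFne, hFnonempty, hFdim⟩ := hF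
  have hleV : ∀ u ∈ V, c u ≤ α := fun u hu => hle u (hP ▸ subset_convexHull ℝ _ (by exact_mod_cast hu))
  set W := V.filter (fun u => c u = α) with hW
  have hWcoe : (W : Set (Fin 2 → ℝ)) = {u : Fin 2 → ℝ | u ∈ V ∧ c u = α} := by
    rw [hW]; ext u; simp
  have hFW : F = convexHull ℝ (W : Set (Fin 2 → ℝ)) := by
    rw [hFeq, hP, face_hull V c α hleV, hWcoe]
  have hFdim1 : Module.finrank ℝ (vectorSpan ℝ F) = 1 := by omega
  have hcol : Collinear ℝ (W : Set (Fin 2 → ℝ)) := by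
    rw [collinear_iff_finrank_le_one]
    have : vectorSpan ℝ (W : Set (Fin 2 → ℝ)) = vectorSpan ℝ F := by rw [hFW, vs_conv]
    rw [this, hFdim1]
  have hcard2 : W.card ≤ 2 :=
    card_le_two_of_collinear (fun u hu => hvert u (Finset.filter_subset _ _ hu)) hcol
  have hcard_ge : 2 ≤ W.card := by
    by_contra hlt
    push_neg at hlt
    interval_cases h : W.card
    · rw [Finset.card_eq_zero.1 h] at hFW
      simp only [Finset.coe_empty, convexHull_empty] at hFW
      exact hFnonempty.ne_empty hFW
    · obtain ⟨x, hx⟩ := Finset.card_eq_one.1 h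
      rw [hx] at hFW
      simp only [Finset.coe_singleton, convexHull_singleton] at hFW
      rw [hFW, vectorSpan_singleton] at hFdim1
      simp at hFdim1
  have hcard : W.card = 2 := le_antisymm hcard2 hcard_ge
  obtain ⟨x, y, hxy, hWxy⟩ := Finset.card_eq_two.1 hcard
  have hxW : x ∈ W := by rw [hWxy]; simp
  have hyW : y ∈ W := by rw [hWxy]; simp
  have hxV : x ∈ V := Finset.filter_subset _ _ hxW
  have hyV : y ∈ V := Finset.filter_subset _ _ hyW
  refine ⟨x, hxV, y, hyV, hxy, ?_, ?_⟩
  · rw [hFW, hWxy]; norm_cast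
  · intro u hu
    have huP : u ∈ P := hP ▸ subset_convexHull ℝ _ (by exact_mod_cast hu)
    constructor
    · intro huF
      rw [hFeq] at huF
      have : u ∈ W := by rw [hW, Finset.mem_filter]; exact ⟨hu, huF.2⟩
      rw [hWxy] at this
      simpa using this
    · rintro (rfl | rfl)
      · rw [hFeq]; exact ⟨huP, (Finset.mem_filter.1 hxW).2⟩
      · rw [hFeq]; exact ⟨huP, (Finset.mem_filter.1 hyW).2⟩

set_option maxHeartbeats 2000000 in
private lemma facets_at_vertex (V : Finset (Fin 2 → ℝ)) (P : Set (Fin 2 → ℝ))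
    (hP : P = convexHull ℝ (V : Set (Fin 2 → ℝ)))
    (hfull : Module.finrank ℝ (vectorSpan ℝ P) = 2)
    (hvert : ∀ u ∈ V, u ∈ Set.extremePoints ℝ P)
    {v : Fin 2 → ℝ} (hv : v ∈ V) :
    ∃ a ∈ V.erase v, ∃ b ∈ V.erase v, a ≠ b ∧
      IsFacet P (convexHull ℝ ({v, a} : Set (Fin 2 → ℝ))) ∧
      IsFacet P (convexHull ℝ ({v, b} : Set (Fin 2 → ℝ))) ∧
      (∀ u ∈ V, u ∈ convexHull ℝ ({v, a} : Set (Fin 2 → ℝ)) ↔ u = v ∨ u = a) ∧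
      (∀ u ∈ V, u ∈ convexHull ℝ ({v, b} : Set (Fin 2 → ℝ)) ↔ u = v ∨ u = b) ∧
      ∀ F : Set (Fin 2 → ℝ), IsFacet P F → v ∈ F →
        F = convexHull ℝ ({v, a} : Set (Fin 2 → ℝ)) ∨
          F = convexHull ℝ ({v, b} : Set (Fin 2 → ℝ)) := by
  classical
  obtain ⟨c, hc⟩ := sep V P hP hvert hv
  set p := c ![1,0] with hp
  set q := c ![0,1] with hq
  set g : (Fin 2 → ℝ) →ₗ[ℝ] ℝ :=
    q • LinearMap.proj (R := ℝ) (φ := fun _ : Fin 2 => ℝ) 0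
      - p • LinearMap.proj (R := ℝ) (φ := fun _ : Fin 2 => ℝ) 1 with hgdef
  have hg : ∀ x : Fin 2 → ℝ, g x = q * x 0 - p * x 1 := by
    intro x; rw [hgdef]; simp
  have hPmem : ∀ u ∈ V, u ∈ P := fun u hu => hP ▸ subset_convexHull ℝ _ (by exact_mod_cast hu)
  have hV3 := card3 V P hP hfull
  have hV'2 : 2 ≤ (V.erase v).card := by
    rw [Finset.card_erase_of_mem hv]; omega
  have hne' : (V.erase v).Nonempty := Finset.card_pos.1 (by omega)
  have hpq : p ^ 2 + q ^ 2 ≠ 0 := by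
    obtain ⟨u0, hu0⟩ := hne'
    intro h0
    have hp0 : p = 0 := by nlinarith [sq_nonneg p, sq_nonneg q]
    have hq0 : q = 0 := by nlinarith [sq_nonneg p, sq_nonneg q]
    have e1 : c u0 = 0 := by rw [lin_apply, ← hp, ← hq, hp0, hq0]; ring
    have e2 : c v = 0 := by rw [lin_apply, ← hp, ← hq, hp0, hq0]; ring
    have := hc u0 hu0
    rw [e1, e2] at this
    exact lt_irrefl 0 this
  have inj : ∀ w : Fin 2 → ℝ, c w = 0 → g w = 0 → w = 0 := by
    intro w h1 h2
    rw [lin_apply, ← hp, ← hq] at h1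
    rw [hg] at h2
    have hw0 : w 0 * (p ^ 2 + q ^ 2) = 0 := by linear_combination p * h1 + q * h2
    have hw1 : w 1 * (p ^ 2 + q ^ 2) = 0 := by linear_combination q * h1 - p * h2
    have hw0' : w 0 = 0 := (mul_eq_zero.1 hw0).resolve_right hpq
    have hw1' : w 1 = 0 := (mul_eq_zero.1 hw1).resolve_right hpq
    funext i; fin_cases i <;> simpa
  have inj2 : ∀ w w' : Fin 2 → ℝ, c w = c w' → g w = g w' → w = w' := by
    intro w w' h1 h2
    have := inj (w - w') (by rw [map_sub, h1, sub_self]) (by rw [map_sub, h2, sub_self])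
    exact sub_eq_zero.1 this
  have hd : ∀ u ∈ V.erase v, 0 < c v - c u := fun u hu => sub_pos.2 (hc u hu)
  obtain ⟨t, htmul⟩ : ∃ t : (Fin 2 → ℝ) → ℝ,
      ∀ u ∈ V.erase v, t u * (c v - c u) = g u - g v :=
    ⟨fun u => (g u - g v) / (c v - c u), fun u hu => div_mul_cancel₀ _ (ne_of_gt (hd u hu))⟩
  -- no point strictly inside a segment from v
  have hhalf : ∀ u ∈ V.erase v, ∀ u' ∈ V.erase v, ∀ s : ℝ,
      0 < s → s < 1 → u - v = s • (u' - v) → False := by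
    intro u hu u' hu' s hs0 hs1 hsu
    have huV : u ∈ V := Finset.mem_of_mem_erase hu
    have hu'V : u' ∈ V := Finset.mem_of_mem_erase hu'
    have hmem : u ∈ openSegment ℝ v u' := by
      refine ⟨1 - s, s, by linarith, hs0, by ring, ?_⟩
      have : u = v + s • (u' - v) := by
        rw [← hsu]; abel
      rw [this, smul_sub, sub_smul, one_smul]; abel
    have := ((mem_extremePoints.1 (hvert u huV)).2 v (hPmem v hv) u' (hPmem u' hu'V) hmem).1
    exact (Finset.ne_of_mem_erase hu) this.symm
  have rayeq : ∀ u ∈ V.erase v, ∀ u' ∈ V.erase v, ∀ s : ℝ,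
      0 < s → u - v = s • (u' - v) → u = u' := by
    intro u hu u' hu' s hs0 hsu
    rcases lt_trichotomy s 1 with hs1 | hs1 | hs1
    · exact (hhalf u hu u' hu' s hs0 hs1 hsu).elim
    · rw [hs1, one_smul] at hsu
      exact sub_left_injective hsu
    · have h' : u' - v = s⁻¹ • (u - v) := by
        rw [hsu, smul_smul, inv_mul_cancel₀ (ne_of_gt hs0), one_smul]
      exact (hhalf u' hu' u hu s⁻¹ (by positivity)
        (by rw [inv_lt_one_iff₀]; right; exact hs1) h').elim
  have tinj : ∀ u ∈ V.erase v, ∀ u' ∈ V.erase v, t u = t u' → u = u' := by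
    intro u hu u' hu' htt
    have hdu := hd u hu
    have hdu' := hd u' hu'
    set s : ℝ := (c v - c u) / (c v - c u') with hs
    have hs0 : 0 < s := div_pos hdu hdu'
    apply rayeq u hu u' hu' s hs0
    apply inj2
    · rw [map_sub, map_smul, map_sub, smul_eq_mul, hs]
      field_simp
      ring
    · rw [map_sub, map_smul, map_sub, smul_eq_mul, hs]
      have e1 := htmul u hu
      have e2 := htmul u' hu'
      rw [← e1, ← e2, htt]
      field_simp
  obtain ⟨a, haV', hamax⟩ := (V.erase v).exists_max_image t hne'
  obtain ⟨b, hbV', hbmin⟩ := (V.erase v).exists_min_image t hne'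
  have htba : t b < t a := by
    rcases lt_or_eq_of_le (hbmin a haV') with h | h
    · exact h
    · exfalso
      obtain ⟨x, hx, y, hy, hxy⟩ := Finset.one_lt_card.1 (by omega : 1 < (V.erase v).card)
      apply hxy
      apply tinj x hx y hy
      have h1 : t x = t a := le_antisymm (hamax x hx) (h ▸ hbmin x hx)
      have h2 : t y = t a := le_antisymm (hamax y hy) (h ▸ hbmin y hy)
      rw [h1, h2]
  have haV : a ∈ V := Finset.mem_of_mem_erase haV'
  have hbV : b ∈ V := Finset.mem_of_mem_erase hbV'
  have hva : v ≠ a := (Finset.ne_of_mem_erase haV').symm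
  have hvb : v ≠ b := (Finset.ne_of_mem_erase hbV').symm
  have hab : a ≠ b := fun h => (ne_of_gt htba) (by rw [h])
  -- the facet through v and a
  set φ : (Fin 2 → ℝ) →ₗ[ℝ] ℝ := g + t a • c with hφdef
  have hφkey : ∀ u ∈ V.erase v, φ u - φ v = (c v - c u) * (t u - t a) := by
    intro u hu
    have e1 := htmul u hu
    simp only [hφdef, LinearMap.add_apply, LinearMap.smul_apply, smul_eq_mul]
    linear_combination -e1
  have hφle : ∀ u ∈ V, φ u ≤ φ v := by
    intro u hu
    by_cases h : u = v
    · rw [h]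
    · have hu' : u ∈ V.erase v := Finset.mem_erase.2 ⟨h, hu⟩
      have e2 : (c v - c u) * (t u - t a) ≤ 0 :=
        mul_nonpos_of_nonneg_of_nonpos (hd u hu').le (by linarith [hamax u hu'])
      linarith [hφkey u hu']
  have hφa : φ a = φ v := by
    have := hφkey a haV'
    simp only [sub_self, mul_zero] at this
    linarith
  have hφstrict : ∀ u ∈ V, φ u = φ v → u = v ∨ u = a := by
    intro u hu hEq
    by_cases h : u = v
    · exact Or.inl h
    · have hu' : u ∈ V.erase v := Finset.mem_erase.2 ⟨h, hu⟩
      right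
      apply tinj u hu' a haV'
      have h1 := hφkey u hu'
      rw [hEq, sub_self] at h1
      have h2 : t u - t a = 0 := by
        rcases mul_eq_zero.1 h1.symm with h3 | h3
        · exact absurd h3 (ne_of_gt (hd u hu'))
        · exact h3
      linarith
  obtain ⟨hFa, hchara⟩ := edge_facet V P hP hfull hv haV hva φ (φ v) hφle rfl hφa hφstrict
  -- the facet through v and b
  set ψ' : (Fin 2 → ℝ) →ₗ[ℝ] ℝ := -(g + t b • c) with hψ'def
  have hψ'key : ∀ u ∈ V.erase v, ψ' u - ψ' v = (c v - c u) * (t b - t u) := by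
    intro u hu
    have e1 := htmul u hu
    simp only [hψ'def, LinearMap.neg_apply, LinearMap.add_apply, LinearMap.smul_apply,
      smul_eq_mul]
    linear_combination e1
  have hψ'le : ∀ u ∈ V, ψ' u ≤ ψ' v := by
    intro u hu
    by_cases h : u = v
    · rw [h]
    · have hu' : u ∈ V.erase v := Finset.mem_erase.2 ⟨h, hu⟩
      have e2 : (c v - c u) * (t b - t u) ≤ 0 :=
        mul_nonpos_of_nonneg_of_nonpos (hd u hu').le (by linarith [hbmin u hu'])
      linarith [hψ'key u hu']
  have hψ'b : ψ' b = ψ' v := by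
    have := hψ'key b hbV'
    simp only [sub_self, mul_zero] at this
    linarith
  have hψ'strict : ∀ u ∈ V, ψ' u = ψ' v → u = v ∨ u = b := by
    intro u hu hEq
    by_cases h : u = v
    · exact Or.inl h
    · have hu' : u ∈ V.erase v := Finset.mem_erase.2 ⟨h, hu⟩
      right
      apply tinj u hu' b hbV'
      have h1 := hψ'key u hu'
      rw [hEq, sub_self] at h1
      have h2 : t b - t u = 0 := by
        rcases mul_eq_zero.1 h1.symm with h3 | h3
        · exact absurd h3 (ne_of_gt (hd u hu'))
        · exact h3
      linarith
  obtain ⟨hFb, hcharb⟩ := edge_facet V P hP hfull hv hbV hvb ψ' (ψ' v) hψ'le rfl hψ'b hψ'strict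
  refine ⟨a, haV', b, hbV', hab, hFa, hFb, hchara, hcharb, ?_⟩
  -- completeness
  intro F hF hvF
  have core : ∀ w ∈ V.erase v, F = convexHull ℝ ({v, w} : Set (Fin 2 → ℝ)) →
      (∀ u ∈ V, u ∈ F ↔ u = v ∨ u = w) →
      (F = convexHull ℝ ({v, a} : Set (Fin 2 → ℝ)) ∨
        F = convexHull ℝ ({v, b} : Set (Fin 2 → ℝ))) := by
    intro w hw hFw hcharw
    have hwab : w = a ∨ w = b := by
      by_contra hcon
      push_neg at hcon
      obtain ⟨hwa, hwb⟩ := hcon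
      have h1 : t b < t w := lt_of_le_of_ne (hbmin w hw)
        (fun h => hwb (tinj w hw b hbV' h.symm))
      have h2 : t w < t a := lt_of_le_of_ne (hamax w hw)
        (fun h => hwa (tinj w hw a haV' h))
      obtain ⟨ψ, β, hψle, hFψ⟩ := hF.1
      have hψv : ψ v = β := by rw [hFψ] at hvF; exact hvF.2
      have hwF : w ∈ F := hFw ▸ subset_convexHull ℝ _ (Set.mem_insert_of_mem _ rfl)
      have hψw : ψ w = β := by rw [hFψ] at hwF; exact hwF.2
      have hda : (0:ℝ) < c v - c a := hd a haV'
      have hdb : (0:ℝ) < c v - c b := hd b hbV'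
      have hdw : (0:ℝ) < c v - c w := hd w hw
      set s₁ : ℝ := (c v - c w) * (t a - t w) / ((c v - c b) * (t a - t b)) with hs₁
      set s₂ : ℝ := (c v - c w) * (t w - t b) / ((c v - c a) * (t a - t b)) with hs₂
      have hs₁0 : 0 < s₁ :=
        div_pos (mul_pos hdw (by linarith)) (mul_pos hdb (by linarith))
      have hs₂0 : 0 < s₂ :=
        div_pos (mul_pos hdw (by linarith)) (mul_pos hda (by linarith))
      have htab : t a - t b ≠ 0 := sub_ne_zero.2 htba.ne'
      have hkey : w - v = s₁ • (b - v) + s₂ • (a - v) := by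
        apply inj2
        · simp only [map_sub, map_add, map_smul, smul_eq_mul]
          rw [hs₁, hs₂]
          field_simp
          ring
        · simp only [map_sub, map_add, map_smul, smul_eq_mul]
          rw [← htmul w hw, ← htmul b hbV', ← htmul a haV', hs₁, hs₂]
          field_simp
          ring
      have hψsum := congrArg ψ hkey
      simp only [map_sub, map_add, map_smul, smul_eq_mul] at hψsum
      rw [hψv, hψw] at hψsum
      have hψb : ψ b ≤ β := hψle b (hPmem b hbV)
      have hψa : ψ a ≤ β := hψle a (hPmem a haV)
      have e1 : s₁ * (ψ b - β) ≤ 0 :=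
        mul_nonpos_of_nonneg_of_nonpos hs₁0.le (by linarith)
      have e2 : s₂ * (ψ a - β) ≤ 0 :=
        mul_nonpos_of_nonneg_of_nonpos hs₂0.le (by linarith)
      have e3 : s₁ * (ψ b - β) + s₂ * (ψ a - β) = 0 := by linarith [hψsum]
      have e4 : s₁ * (ψ b - β) = 0 := by linarith
      have e5 : ψ b = β := by
        have := (mul_eq_zero.1 e4).resolve_left hs₁0.ne'
        linarith
      have hbF : b ∈ F := by rw [hFψ]; exact ⟨hPmem b hbV, e5⟩
      rcases (hcharw b hbV).1 hbF with h | h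
      · exact (Finset.ne_of_mem_erase hbV') h
      · exact hwb h.symm
    rcases hwab with rfl | rfl
    · exact Or.inl hFw
    · exact Or.inr hFw
  obtain ⟨x, hxV, y, hyV, hxy, hFeq, hchar⟩ := facet_structure V P hP hfull hvert hF
  rcases (hchar v hv).1 hvF with rfl | rfl
  · exact core y (Finset.mem_erase.2 ⟨hxy.symm, hyV⟩) hFeq hchar
  · exact core x (Finset.mem_erase.2 ⟨hxy, hxV⟩)
      (by rw [hFeq, Set.pair_comm]) (fun u hu => (hchar u hu).trans or_comm)


set_option maxHeartbeats 1000000 in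
/-- A polygon (2-polytope) has a special 1-simplex — two vertices such that every
edge (facet) contains exactly one of them — if and only if it has exactly 4
vertices, i.e. is a convex quadrilateral. -/
theorem polygon_special_one_simplex_iff_quadrilateral
    (V : Finset (Fin 2 → ℝ)) (P : Set (Fin 2 → ℝ))
    (hP : P = convexHull ℝ (V : Set (Fin 2 → ℝ)))
    (hfull : Module.finrank ℝ (vectorSpan ℝ P) = 2)
    (hvert : ∀ u ∈ V, u ∈ Set.extremePoints ℝ P) :
    (∃ v₀ ∈ V, ∃ v₁ ∈ V, v₀ ≠ v₁ ∧
      ∀ F : Set (Fin 2 → ℝ), IsFacet P F → Xor' (v₀ ∈ F) (v₁ ∈ F)) ↔ V.card = 4 := by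
  classical
  constructor
  · rintro ⟨v₀, hv₀, v₁, hv₁, hne01, hxor⟩
    obtain ⟨a₁, ha₁', a₂, ha₂', ha12, hFa₁, hFa₂, hchar₁, hchar₂, hcompl₀⟩ :=
      facets_at_vertex V P hP hfull hvert hv₀
    have ha₁V : a₁ ∈ V := Finset.mem_of_mem_erase ha₁'
    have ha₂V : a₂ ∈ V := Finset.mem_of_mem_erase ha₂'
    have hv₀A₁ : v₀ ∈ convexHull ℝ ({v₀, a₁} : Set (Fin 2 → ℝ)) :=
      subset_convexHull ℝ _ (Set.mem_insert _ _)
    have hv₀A₂ : v₀ ∈ convexHull ℝ ({v₀, a₂} : Set (Fin 2 → ℝ)) :=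
      subset_convexHull ℝ _ (Set.mem_insert _ _)
    have hv₁A₁ : v₁ ∉ convexHull ℝ ({v₀, a₁} : Set (Fin 2 → ℝ)) := by
      rcases hxor _ hFa₁ with ⟨_, h⟩ | ⟨_, h⟩
      · exact h
      · exact absurd hv₀A₁ h
    have hv₁A₂ : v₁ ∉ convexHull ℝ ({v₀, a₂} : Set (Fin 2 → ℝ)) := by
      rcases hxor _ hFa₂ with ⟨_, h⟩ | ⟨_, h⟩
      · exact h
      · exact absurd hv₀A₂ h
    have hv₁a₁ : v₁ ≠ a₁ := fun h =>
      hv₁A₁ (h ▸ subset_convexHull ℝ _ (Set.mem_insert_of_mem _ rfl))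
    have hv₁a₂ : v₁ ≠ a₂ := fun h =>
      hv₁A₂ (h ▸ subset_convexHull ℝ _ (Set.mem_insert_of_mem _ rfl))
    have hVsub : V ⊆ {v₀, v₁, a₁, a₂} := by
      intro u hu
      by_cases h0 : u = v₀
      · simp [h0]
      by_cases h1 : u = v₁
      · simp [h1]
      obtain ⟨x, hx', y, hy', hxy, hFx, hFy, hcx, hcy, _⟩ :=
        facets_at_vertex V P hP hfull hvert hu
      have key : ∀ z ∈ V.erase u, IsFacet P (convexHull ℝ ({u, z} : Set (Fin 2 → ℝ))) →
          (∀ w ∈ V, w ∈ convexHull ℝ ({u, z} : Set (Fin 2 → ℝ)) ↔ w = u ∨ w = z) →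
          z = v₀ ∨ z = v₁ := by
        intro z hz hFz hcz
        rcases hxor _ hFz with ⟨hmem, _⟩ | ⟨hmem, _⟩
        · left
          rcases (hcz v₀ hv₀).1 hmem with h | h
          · exact (h0 h.symm).elim
          · exact h.symm
        · right
          rcases (hcz v₁ hv₁).1 hmem with h | h
          · exact (h1 h.symm).elim
          · exact h.symm
      have hx01 := key x hx' hFx hcx
      have hy01 := key y hy' hFy hcy
      have hv₀fac : IsFacet P (convexHull ℝ ({u, v₀} : Set (Fin 2 → ℝ))) := by
        rcases hx01 with h | h
        · exact h ▸ hFx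
        · rcases hy01 with h' | h'
          · exact h' ▸ hFy
          · exact (hxy (h.trans h'.symm)).elim
      have hF' : IsFacet P (convexHull ℝ ({v₀, u} : Set (Fin 2 → ℝ))) := by
        rwa [Set.pair_comm] at hv₀fac
      have hv₀mem : v₀ ∈ convexHull ℝ ({v₀, u} : Set (Fin 2 → ℝ)) :=
        subset_convexHull ℝ _ (Set.mem_insert _ _)
      rcases hcompl₀ _ hF' hv₀mem with hEq | hEq
      · have humem : u ∈ convexHull ℝ ({v₀, a₁} : Set (Fin 2 → ℝ)) :=
          hEq ▸ subset_convexHull ℝ _ (Set.mem_insert_of_mem _ rfl)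
        rcases (hchar₁ u hu).1 humem with h | h
        · exact (h0 h).elim
        · simp [h]
      · have humem : u ∈ convexHull ℝ ({v₀, a₂} : Set (Fin 2 → ℝ)) :=
          hEq ▸ subset_convexHull ℝ _ (Set.mem_insert_of_mem _ rfl)
        rcases (hchar₂ u hu).1 humem with h | h
        · exact (h0 h).elim
        · simp [h]
    have hVeq : V = {v₀, v₁, a₁, a₂} := by
      apply Finset.Subset.antisymm hVsub
      intro z hz
      simp only [Finset.mem_insert, Finset.mem_singleton] at hz
      rcases hz with rfl | rfl | rfl | rfl <;> assumption
    have hv₀a₁ : v₀ ≠ a₁ := (Finset.ne_of_mem_erase ha₁').symm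
    have hv₀a₂ : v₀ ≠ a₂ := (Finset.ne_of_mem_erase ha₂').symm
    rw [hVeq]
    rw [Finset.card_insert_of_notMem (by simp [hne01, hv₀a₁, hv₀a₂]),
      Finset.card_insert_of_notMem (by simp [hv₁a₁, hv₁a₂]),
      Finset.card_insert_of_notMem (by simp [ha12]), Finset.card_singleton]
  · intro hcard
    obtain ⟨v₀, hv₀⟩ := Finset.card_pos.1 (by omega : 0 < V.card)
    obtain ⟨a, ha', b, hb', hab, hFA, hFB, hchA, hchB, hcompl₀⟩ :=
      facets_at_vertex V P hP hfull hvert hv₀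
    have haV : a ∈ V := Finset.mem_of_mem_erase ha'
    have hbV : b ∈ V := Finset.mem_of_mem_erase hb'
    have hav₀ : a ≠ v₀ := Finset.ne_of_mem_erase ha'
    have hbv₀ : b ≠ v₀ := Finset.ne_of_mem_erase hb'
    have hcard3 : ({v₀, a, b} : Finset (Fin 2 → ℝ)).card ≤ 3 := by
      apply le_trans (Finset.card_insert_le _ _)
      exact Nat.succ_le_succ (le_trans (Finset.card_insert_le _ _) (by simp))
    have hnsub : ¬ V ⊆ ({v₀, a, b} : Finset (Fin 2 → ℝ)) := by
      intro h
      have := Finset.card_le_card h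
      omega
    obtain ⟨v₁, hv₁, hv₁n⟩ := Finset.not_subset.1 hnsub
    simp only [Finset.mem_insert, Finset.mem_singleton, not_or] at hv₁n
    obtain ⟨hn0, hna, hnb⟩ := hv₁n
    have hc4 : ({v₀, a, b, v₁} : Finset (Fin 2 → ℝ)).card = 4 := by
      rw [Finset.card_insert_of_notMem (by
          simp only [Finset.mem_insert, Finset.mem_singleton]
          push_neg
          exact ⟨hav₀.symm, hbv₀.symm, Ne.symm hn0⟩),
        Finset.card_insert_of_notMem (by
          simp only [Finset.mem_insert, Finset.mem_singleton]
          push_neg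
          exact ⟨hab, fun h => hna h.symm⟩),
        Finset.card_insert_of_notMem (by
          simp only [Finset.mem_singleton]
          exact fun h => hnb h.symm),
        Finset.card_singleton]
    have hVeq : ({v₀, a, b, v₁} : Finset (Fin 2 → ℝ)) = V := by
      apply Finset.eq_of_subset_of_card_le
      · intro z hz
        simp only [Finset.mem_insert, Finset.mem_singleton] at hz
        rcases hz with rfl | rfl | rfl | rfl <;> assumption
      · rw [hcard, hc4]
    have hmemV4 : ∀ z, z ∈ V → z = v₀ ∨ z = a ∨ z = b ∨ z = v₁ := by
      intro z hz
      rw [← hVeq] at hz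
      simpa using hz
    refine ⟨v₀, hv₀, v₁, hv₁, Ne.symm hn0, ?_⟩
    intro F hF
    obtain ⟨x, hxV, y, hyV, hxy, hFeq, hchar⟩ := facet_structure V P hP hfull hvert hF
    have hxF : x ∈ F := hFeq ▸ subset_convexHull ℝ _ (Set.mem_insert _ _)
    have hyF : y ∈ F := hFeq ▸ subset_convexHull ℝ _ (Set.mem_insert_of_mem _ rfl)
    have hv₁nA : v₁ ∉ convexHull ℝ ({v₀, a} : Set (Fin 2 → ℝ)) := by
      intro h
      rcases (hchA v₁ hv₁).1 h with h' | h'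
      exacts [hn0 h', hna h']
    have hv₁nB : v₁ ∉ convexHull ℝ ({v₀, b} : Set (Fin 2 → ℝ)) := by
      intro h
      rcases (hchB v₁ hv₁).1 h with h' | h'
      exacts [hn0 h', hnb h']
    by_cases h0 : v₀ ∈ F
    · by_cases h1 : v₁ ∈ F
      · exfalso
        rcases hcompl₀ F hF h0 with hEq | hEq
        · exact hv₁nA (hEq ▸ h1)
        · exact hv₁nB (hEq ▸ h1)
      · exact Or.inl ⟨h0, h1⟩
    · refine Or.inr ⟨?_, h0⟩
      by_contra h1
      have hxab : x = a ∨ x = b := by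
        rcases hmemV4 x hxV with rfl | rfl | rfl | rfl
        · exact (h0 hxF).elim
        · exact Or.inl rfl
        · exact Or.inr rfl
        · exact (h1 hxF).elim
      have hyab : y = a ∨ y = b := by
        rcases hmemV4 y hyV with rfl | rfl | rfl | rfl
        · exact (h0 hyF).elim
        · exact Or.inl rfl
        · exact Or.inr rfl
        · exact (h1 hyF).elim
      have hFab : F = convexHull ℝ ({a, b} : Set (Fin 2 → ℝ)) := by
        rcases hxab with rfl | rfl <;> rcases hyab with rfl | rfl
        · exact (hxy rfl).elim
        · exact hFeq
        · rw [hFeq, Set.pair_comm]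
        · exact (hxy rfl).elim
      obtain ⟨w₁, hw₁', w₂, hw₂', hw12, hE₁, hE₂, hcE₁, hcE₂, hcompl_a⟩ :=
        facets_at_vertex V P hP hfull hvert haV
      obtain ⟨x₁, hx₁', x₂, hx₂', hx12, hX₁, hX₂, hcX₁, hcX₂, hcompl_b⟩ :=
        facets_at_vertex V P hP hfull hvert hbV
      obtain ⟨z₁, hz₁', z₂, hz₂', hz12, hG₁, hG₂, hcG₁, hcG₂, _⟩ :=
        facets_at_vertex V P hP hfull hvert hv₁
      have hzV : z₁ ∈ V := Finset.mem_of_mem_erase hz₁'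
      have hzne : z₁ ≠ v₁ := Finset.ne_of_mem_erase hz₁'
      rcases hmemV4 z₁ hzV with hcz | hcz | hcz | hcz
      · -- z₁ = v₀
        rw [hcz] at hG₁
        have hG' : IsFacet P (convexHull ℝ ({v₀, v₁} : Set (Fin 2 → ℝ))) := by
          rwa [Set.pair_comm] at hG₁
        have hv₀G : v₀ ∈ convexHull ℝ ({v₀, v₁} : Set (Fin 2 → ℝ)) :=
          subset_convexHull ℝ _ (Set.mem_insert _ _)
        rcases hcompl₀ _ hG' hv₀G with hEq | hEq
        · exact hv₁nA (hEq ▸ subset_convexHull ℝ _ (Set.mem_insert_of_mem _ rfl))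
        · exact hv₁nB (hEq ▸ subset_convexHull ℝ _ (Set.mem_insert_of_mem _ rfl))
      · -- z₁ = a
        rw [hcz] at hG₁
        have hG' : IsFacet P (convexHull ℝ ({a, v₁} : Set (Fin 2 → ℝ))) := by
          rwa [Set.pair_comm] at hG₁
        have hAa : IsFacet P (convexHull ℝ ({a, v₀} : Set (Fin 2 → ℝ))) := by
          rwa [Set.pair_comm] at hFA
        have hamem1 : a ∈ convexHull ℝ ({a, v₀} : Set (Fin 2 → ℝ)) :=
          subset_convexHull ℝ _ (Set.mem_insert _ _)
        have hamem2 : a ∈ F := hFab ▸ subset_convexHull ℝ _ (Set.mem_insert _ _)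
        have hamem3 : a ∈ convexHull ℝ ({a, v₁} : Set (Fin 2 → ℝ)) :=
          subset_convexHull ℝ _ (Set.mem_insert _ _)
        have c1 := hcompl_a _ hAa hamem1
        have c2 := hcompl_a _ hF hamem2
        have c3 := hcompl_a _ hG' hamem3
        have hne12 : convexHull ℝ ({a, v₀} : Set (Fin 2 → ℝ)) ≠ F := by
          intro h
          exact h0 (h ▸ subset_convexHull ℝ _ (Set.mem_insert_of_mem _ rfl))
        have hne31 : convexHull ℝ ({a, v₁} : Set (Fin 2 → ℝ)) ≠
            convexHull ℝ ({a, v₀} : Set (Fin 2 → ℝ)) := by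
          intro h
          apply hv₁nA
          have hm : v₁ ∈ convexHull ℝ ({a, v₀} : Set (Fin 2 → ℝ)) :=
            h ▸ subset_convexHull ℝ _ (Set.mem_insert_of_mem _ rfl)
          rwa [Set.pair_comm] at hm
        have hne32 : convexHull ℝ ({a, v₁} : Set (Fin 2 → ℝ)) ≠ F := by
          intro h
          exact h1 (h ▸ subset_convexHull ℝ _ (Set.mem_insert_of_mem _ rfl))
        rcases c1 with h1' | h1' <;> rcases c2 with h2' | h2' <;> rcases c3 with h3' | h3' <;>
          first
            | exact hne12 (h1'.trans h2'.symm)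
            | exact hne31 (h3'.trans h1'.symm)
            | exact hne32 (h3'.trans h2'.symm)
      · -- z₁ = b
        rw [hcz] at hG₁
        have hG' : IsFacet P (convexHull ℝ ({b, v₁} : Set (Fin 2 → ℝ))) := by
          rwa [Set.pair_comm] at hG₁
        have hBb : IsFacet P (convexHull ℝ ({b, v₀} : Set (Fin 2 → ℝ))) := by
          rwa [Set.pair_comm] at hFB
        have hFba : F = convexHull ℝ ({b, a} : Set (Fin 2 → ℝ)) := by
          rw [hFab, Set.pair_comm]
        have hbmem1 : b ∈ convexHull ℝ ({b, v₀} : Set (Fin 2 → ℝ)) :=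
          subset_convexHull ℝ _ (Set.mem_insert _ _)
        have hbmem2 : b ∈ F := hFba ▸ subset_convexHull ℝ _ (Set.mem_insert _ _)
        have hbmem3 : b ∈ convexHull ℝ ({b, v₁} : Set (Fin 2 → ℝ)) :=
          subset_convexHull ℝ _ (Set.mem_insert _ _)
        have c1 := hcompl_b _ hBb hbmem1
        have c2 := hcompl_b _ hF hbmem2
        have c3 := hcompl_b _ hG' hbmem3
        have hne12 : convexHull ℝ ({b, v₀} : Set (Fin 2 → ℝ)) ≠ F := by
          intro h
          exact h0 (h ▸ subset_convexHull ℝ _ (Set.mem_insert_of_mem _ rfl))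
        have hne31 : convexHull ℝ ({b, v₁} : Set (Fin 2 → ℝ)) ≠
            convexHull ℝ ({b, v₀} : Set (Fin 2 → ℝ)) := by
          intro h
          apply hv₁nB
          have hm : v₁ ∈ convexHull ℝ ({b, v₀} : Set (Fin 2 → ℝ)) :=
            h ▸ subset_convexHull ℝ _ (Set.mem_insert_of_mem _ rfl)
          rwa [Set.pair_comm] at hm
        have hne32 : convexHull ℝ ({b, v₁} : Set (Fin 2 → ℝ)) ≠ F := by
          intro h
          exact h1 (h ▸ subset_convexHull ℝ _ (Set.mem_insert_of_mem _ rfl))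
        rcases c1 with h1' | h1' <;> rcases c2 with h2' | h2' <;> rcases c3 with h3' | h3' <;>
          first
            | exact hne12 (h1'.trans h2'.symm)
            | exact hne31 (h3'.trans h1'.symm)
            | exact hne32 (h3'.trans h2'.symm)
      · exact hzne hcz
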